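/- (Lévy's extension of the Borel–Cantelli lemma, divergence direction) Let (X_n) be a sequence of {0,1}-valued random variables adapted to a filtration (ℱ_n) with p_n = E[X_n | ℱ_{n-1}]. Then almost surely, ∑_n p_n = ∞ implies (∑_{k≤n} X_k)/(∑_{k≤n} p_k) → 1. -/

import Mathlib

open Filter MeasureTheory Finset
set_option linter.unusedSectionVars false
set_option maxHeartbeats 1000000

lemma abel_id (u b : ℕ → ℝ) (hb : ∀ n, b n ≠ 0) (n : ℕ) :
    ∑ k ∈ range (n+1), u k =
      b n * (∑ k ∈ range (n+1), u k / b k)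
        - ∑ k ∈ range n, (b (k+1) - b k) * (∑ j ∈ range (k+1), u j / b j) := by
  induction n with
  | zero => simp; rw [mul_comm, div_mul_cancel₀ _ (hb 0)]
  | succ n ih =>
    rw [sum_range_succ (f := u), ih]
    simp only [sum_range_succ]
    field_simp [hb n, hb (n+1)]
    ring

-- weighted average part: if e → 0, Δb ≥ 0, b → ∞ then (∑_{k<n} (b(k+1)-b k) * e (k+1)) / b n → 0
lemma wavg {b e : ℕ → ℝ} (hb1 : ∀ n, 1 ≤ b n) (hbm : Monotone b)
    (hbt : Tendsto b atTop atTop) (he : Tendsto e atTop (nhds 0)) :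
    Tendsto (fun n => (∑ k ∈ range n, (b (k+1) - b k) * e (k+1)) / b n) atTop (nhds 0) := by
  rw [Metric.tendsto_atTop]
  intro ε hε
  rw [Metric.tendsto_atTop] at he
  obtain ⟨N₁, hN₁⟩ := he (ε/2) (by positivity)
  set C := |∑ k ∈ range N₁, (b (k+1) - b k) * e (k+1)| with hC
  obtain ⟨N₂, hN₂⟩ := eventually_atTop.1 (hbt.eventually_ge_atTop (2*(C+1)/ε))
  refine ⟨max N₁ N₂, fun n hn => ?_⟩
  have hn1 : N₁ ≤ n := le_trans (le_max_left _ _) hn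
  have hn2 : N₂ ≤ n := le_trans (le_max_right _ _) hn
  have hbn : 0 < b n := lt_of_lt_of_le zero_lt_one (hb1 n)
  rw [Real.dist_eq, sub_zero, abs_div, abs_of_pos hbn, div_lt_iff₀ hbn]
  -- |∑_{k<n}| ≤ C + (ε/2) * (b n - b N₁)
  have key : |∑ k ∈ range n, (b (k+1) - b k) * e (k+1)| ≤ C + ε/2 * b n := by
    rw [← sum_range_add_sum_Ico _ hn1]
    refine (abs_add_le _ _).trans (add_le_add le_rfl ?_)
    calc |∑ k ∈ Ico N₁ n, (b (k+1) - b k) * e (k+1)|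
        ≤ ∑ k ∈ Ico N₁ n, |(b (k+1) - b k) * e (k+1)| := abs_sum_le_sum_abs _ _
      _ ≤ ∑ k ∈ Ico N₁ n, (b (k+1) - b k) * (ε/2) := by
          refine sum_le_sum fun k hk => ?_
          rw [abs_mul, abs_of_nonneg (sub_nonneg.2 (hbm (Nat.le_succ k)))]
          have := hN₁ (k+1) (le_trans (mem_Ico.1 hk).1 (Nat.le_succ k))
          rw [Real.dist_eq, sub_zero] at this
          exact mul_le_mul_of_nonneg_left this.le (sub_nonneg.2 (hbm (Nat.le_succ k)))
      _ = (b n - b N₁) * (ε/2) := by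
          rw [← sum_mul, sum_Ico_eq_sub _ hn1, sum_range_sub (f := b), sum_range_sub (f := b)]
          ring_nf
      _ ≤ ε/2 * b n := by nlinarith [hb1 N₁, hb1 n]
  have h' : 2*(C+1) ≤ b n * ε := (div_le_iff₀ hε).1 (hN₂ n hn2)
  calc |∑ k ∈ range n, (b (k+1) - b k) * e (k+1)| ≤ C + ε/2 * b n := key
    _ < ε * b n := by nlinarith

lemma kronecker {u b : ℕ → ℝ} (hb1 : ∀ n, 1 ≤ b n) (hbm : Monotone b)
    (hbt : Tendsto b atTop atTop) {L : ℝ}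
    (hs : Tendsto (fun n => ∑ k ∈ range n, u k / b k) atTop (nhds L)) :
    Tendsto (fun n => (∑ k ∈ range (n+1), u k) / b n) atTop (nhds 0) := by
  have hbne : ∀ n, b n ≠ 0 := fun n => (lt_of_lt_of_le zero_lt_one (hb1 n)).ne'
  set s : ℕ → ℝ := fun n => ∑ k ∈ range n, u k / b k with hs_def
  have he : Tendsto (fun n => s n - L) atTop (nhds 0) := by
    simpa using hs.sub (tendsto_const_nhds (x := L))
  have hW := wavg hb1 hbm hbt he
  have hinv : Tendsto (fun n => (b n)⁻¹) atTop (nhds 0) := hbt.inv_tendsto_atTop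
  have hfrac : Tendsto (fun n => L * (b n - b 0) / b n) atTop (nhds L) := by
    have : ∀ n, L * (b n - b 0) / b n = L - L * b 0 * (b n)⁻¹ := by
      intro n
      rw [mul_sub, sub_div, mul_div_assoc L (b n) (b n), div_self (hbne n), mul_one, div_eq_mul_inv]
    rw [show (nhds L) = nhds (L - L * b 0 * 0) by ring_nf]
    exact Tendsto.congr (fun n => (this n).symm)
      (tendsto_const_nhds.sub (tendsto_const_nhds.mul hinv))
  have hshift : Tendsto (fun n => s (n+1)) atTop (nhds L) :=
    (tendsto_add_atTop_iff_nat 1).2 hs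
  have hiden : ∀ n, (∑ k ∈ range (n+1), u k) / b n
      = s (n+1) - L * (b n - b 0) / b n
        - (∑ k ∈ range n, (b (k+1) - b k) * (s (k+1) - L)) / b n := by
    intro n
    have h1 : ∑ k ∈ range n, (b (k+1) - b k) * (s (k+1) - L)
        = (∑ k ∈ range n, (b (k+1) - b k) * s (k+1)) - (b n - b 0) * L := by
      rw [← sum_range_sub (f := b), sum_mul, ← sum_sub_distrib]
      exact sum_congr rfl fun k _ => by ring
    rw [abel_id u b hbne n, h1]
    field_simp [hbne n]
    ring
  rw [show (0:ℝ) = L - L - 0 by ring]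
  exact Tendsto.congr (fun n => (hiden n).symm) ((hshift.sub hfrac).sub hW)


section main
variable {Ω : Type*} {m0 : MeasurableSpace Ω} (μ : Measure Ω) [IsProbabilityMeasure μ]
    (ℱ : Filtration ℕ m0) (X : ℕ → Ω → ℝ)

/-- truncated version of the conditional expectation -/
noncomputable def bcQ (n : ℕ) (ω : Ω) : ℝ := min 1 (max 0 ((μ[X (n+1) | ℱ n]) ω))

/-- 1 + predictable partial sums -/
noncomputable def bcD (n : ℕ) (ω : Ω) : ℝ := 1 + ∑ k ∈ range n, bcQ μ ℱ X k ω

/-- martingale increments -/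
noncomputable def bcZ (n : ℕ) (ω : Ω) : ℝ :=
  (X (n+1) ω - bcQ μ ℱ X n ω) / bcD μ ℱ X (n+1) ω

/-- the martingale -/
noncomputable def bcM (n : ℕ) (ω : Ω) : ℝ := ∑ k ∈ range n, bcZ μ ℱ X k ω

lemma bcQ_nonneg (n : ℕ) (ω : Ω) : 0 ≤ bcQ μ ℱ X n ω :=
  le_min zero_le_one (le_max_left _ _)

lemma bcQ_le_one (n : ℕ) (ω : Ω) : bcQ μ ℱ X n ω ≤ 1 := min_le_left _ _

lemma bcQ_meas (n : ℕ) : StronglyMeasurable[ℱ n] (bcQ μ ℱ X n) :=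
  (measurable_const.min (measurable_const.max stronglyMeasurable_condExp.measurable)).stronglyMeasurable

lemma bcD_meas (n : ℕ) : StronglyMeasurable[ℱ n] (bcD μ ℱ X n) := by
  refine stronglyMeasurable_const.add (Finset.stronglyMeasurable_fun_sum _ fun k hk => ?_)
  exact (bcQ_meas μ ℱ X k).mono (ℱ.mono (le_of_lt (mem_range.1 hk)))

lemma bcD_one_le (n : ℕ) (ω : Ω) : 1 ≤ bcD μ ℱ X n ω := by
  have : 0 ≤ ∑ k ∈ range n, bcQ μ ℱ X k ω :=
    Finset.sum_nonneg fun k _ => bcQ_nonneg μ ℱ X k ω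
  simp only [bcD]; linarith

lemma bcD_pos (n : ℕ) (ω : Ω) : 0 < bcD μ ℱ X n ω :=
  lt_of_lt_of_le zero_lt_one (bcD_one_le μ ℱ X n ω)

lemma bcD_succ (n : ℕ) (ω : Ω) : bcD μ ℱ X (n+1) ω = bcD μ ℱ X n ω + bcQ μ ℱ X n ω := by
  simp only [bcD, sum_range_succ]; ring

lemma bcD_mono (ω : Ω) : Monotone (fun n => bcD μ ℱ X n ω) :=
  monotone_nat_of_le_succ fun n => by
    rw [bcD_succ]; linarith [bcQ_nonneg μ ℱ X n ω]

lemma bcD_le (n : ℕ) (ω : Ω) : bcD μ ℱ X n ω ≤ n + 1 := by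
  have : ∑ k ∈ range n, bcQ μ ℱ X k ω ≤ ∑ k ∈ range n, (1:ℝ) :=
    Finset.sum_le_sum fun k _ => bcQ_le_one μ ℱ X k ω
  simp only [bcD]
  simp only [sum_const, card_range, nsmul_eq_mul, mul_one] at this
  linarith

lemma bcX_mem (h01 : ∀ n ω, X (n + 1) ω = 0 ∨ X (n + 1) ω = 1) (n : ℕ) (ω : Ω) :
    0 ≤ X (n+1) ω ∧ X (n+1) ω ≤ 1 := by
  rcases h01 n ω with h | h <;> rw [h] <;> norm_num

lemma bcX_int (h01 : ∀ n ω, X (n + 1) ω = 0 ∨ X (n + 1) ω = 1)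
    (hadapted : ∀ n, StronglyMeasurable[ℱ (n + 1)] (X (n + 1))) (n : ℕ) :
    Integrable (X (n+1)) μ := by
  refine (integrable_const (1:ℝ)).mono'
    (((hadapted n).mono (ℱ.le (n+1))).aestronglyMeasurable) ?_
  refine Eventually.of_forall fun ω => ?_
  rw [Real.norm_eq_abs, abs_le]
  constructor <;> linarith [(bcX_mem X h01 n ω).1, (bcX_mem X h01 n ω).2]

lemma bcQ_ae (h01 : ∀ n ω, X (n + 1) ω = 0 ∨ X (n + 1) ω = 1)
    (hadapted : ∀ n, StronglyMeasurable[ℱ (n + 1)] (X (n + 1))) (n : ℕ) :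
    bcQ μ ℱ X n =ᵐ[μ] μ[X (n+1) | ℱ n] := by
  have h0 : 0 ≤ᵐ[μ] μ[X (n+1) | ℱ n] :=
    condExp_nonneg (Eventually.of_forall fun ω => (bcX_mem X h01 n ω).1)
  have h1 : μ[X (n+1) | ℱ n] ≤ᵐ[μ] fun _ => (1:ℝ) := by
    refine (condExp_mono (bcX_int μ ℱ X h01 hadapted n) (integrable_const 1)
      (Eventually.of_forall fun ω => (bcX_mem X h01 n ω).2)).trans ?_
    rw [condExp_const (ℱ.le n)]
  filter_upwards [h0, h1] with ω hω0 hω1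
  simp only [Pi.zero_apply] at hω0
  simp only [bcQ]
  rw [max_eq_right hω0, min_eq_right hω1]

/-- generic bounded integrable lemma -/
lemma bc_int_of_bound {f : Ω → ℝ} (hf : StronglyMeasurable[m0] f) (C : ℝ)
    (hC : ∀ ω, |f ω| ≤ C) : Integrable f μ :=
  (integrable_const C).mono' hf.aestronglyMeasurable
    (Eventually.of_forall fun ω => by rw [Real.norm_eq_abs]; exact hC ω)

/-- Key orthogonality: for f bounded ℱ n-measurable, ∫ f·(X_{n+1} - q_n) = 0. -/
lemma bc_key (h01 : ∀ n ω, X (n + 1) ω = 0 ∨ X (n + 1) ω = 1)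
    (hadapted : ∀ n, StronglyMeasurable[ℱ (n + 1)] (X (n + 1)))
    (n : ℕ) (f : Ω → ℝ) (hf : StronglyMeasurable[ℱ n] f) (C : ℝ)
    (hC : ∀ ω, |f ω| ≤ C) :
    ∫ ω, f ω * (X (n+1) ω - bcQ μ ℱ X n ω) ∂μ = 0 := by
  have hfm0 : StronglyMeasurable[m0] f := hf.mono (ℱ.le n)
  have hXint := bcX_int μ ℱ X h01 hadapted n
  have hfX : Integrable (f * X (n+1)) μ := by
    refine bc_int_of_bound μ (hfm0.mul ((hadapted n).mono (ℱ.le (n+1)))) C fun ω => ?_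
    rw [Pi.mul_apply, abs_mul]
    calc |f ω| * |X (n+1) ω| ≤ C * 1 := by
          refine mul_le_mul (hC ω) ?_ (abs_nonneg _) ((abs_nonneg _).trans (hC ω))
          rw [abs_le]; constructor <;> linarith [(bcX_mem X h01 n ω).1, (bcX_mem X h01 n ω).2]
      _ = C := mul_one C
  have hfq : Integrable (f * bcQ μ ℱ X n) μ := by
    refine bc_int_of_bound μ (hfm0.mul ((bcQ_meas μ ℱ X n).mono (ℱ.le n))) C fun ω => ?_
    rw [Pi.mul_apply, abs_mul]
    calc |f ω| * |bcQ μ ℱ X n ω| ≤ C * 1 := by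
          refine mul_le_mul (hC ω) ?_ (abs_nonneg _) ((abs_nonneg _).trans (hC ω))
          rw [abs_le]; constructor <;> linarith [bcQ_nonneg μ ℱ X n ω, bcQ_le_one μ ℱ X n ω]
      _ = C := mul_one C
  have hmul := condExp_mul_of_stronglyMeasurable_left hf hfX hXint
  have e1 : ∫ ω, f ω * X (n+1) ω ∂μ = ∫ ω, f ω * (μ[X (n+1)|ℱ n]) ω ∂μ :=
    calc ∫ ω, f ω * X (n+1) ω ∂μ = ∫ ω, (f * X (n+1)) ω ∂μ := rfl
      _ = ∫ ω, (μ[f * X (n+1)|ℱ n]) ω ∂μ := (integral_condExp (ℱ.le n)).symm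
      _ = ∫ ω, (f * μ[X (n+1)|ℱ n]) ω ∂μ := integral_congr_ae hmul
      _ = ∫ ω, f ω * (μ[X (n+1)|ℱ n]) ω ∂μ := rfl
  have e2 : ∫ ω, f ω * (μ[X (n+1)|ℱ n]) ω ∂μ = ∫ ω, f ω * bcQ μ ℱ X n ω ∂μ := by
    refine integral_congr_ae ?_
    filter_upwards [bcQ_ae μ ℱ X h01 hadapted n] with ω hω
    rw [hω]
  have hsub := integral_sub hfX hfq
  simp only [Pi.mul_apply, Pi.sub_apply] at hsub
  calc ∫ ω, f ω * (X (n+1) ω - bcQ μ ℱ X n ω) ∂μ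
      = ∫ ω, (f ω * X (n+1) ω - f ω * bcQ μ ℱ X n ω) ∂μ :=
        integral_congr_ae (Eventually.of_forall fun ω => by ring)
    _ = ∫ ω, f ω * X (n+1) ω ∂μ - ∫ ω, f ω * bcQ μ ℱ X n ω ∂μ := hsub
    _ = 0 := by rw [e1, e2, sub_self]

lemma bcD_meas' (n : ℕ) : StronglyMeasurable[ℱ n] (bcD μ ℱ X (n+1)) := by
  refine stronglyMeasurable_const.add (Finset.stronglyMeasurable_fun_sum _ fun k hk => ?_)
  exact (bcQ_meas μ ℱ X k).mono (ℱ.mono (Nat.lt_succ_iff.1 (mem_range.1 hk)))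

lemma bcZ_meas (hadapted : ∀ n, StronglyMeasurable[ℱ (n + 1)] (X (n + 1))) (n : ℕ) :
    StronglyMeasurable[ℱ (n+1)] (bcZ μ ℱ X n) := by
  have h1 : StronglyMeasurable[ℱ (n+1)] (fun ω => X (n+1) ω - bcQ μ ℱ X n ω) :=
    (hadapted n).sub ((bcQ_meas μ ℱ X n).mono (ℱ.mono (Nat.le_succ n)))
  have h2 : StronglyMeasurable[ℱ (n+1)] (bcD μ ℱ X (n+1)) :=
    (bcD_meas' μ ℱ X n).mono (ℱ.mono (Nat.le_succ n))
  exact (h1.measurable.div h2.measurable).stronglyMeasurable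

lemma bcZ_abs_le (h01 : ∀ n ω, X (n + 1) ω = 0 ∨ X (n + 1) ω = 1) (n : ℕ) (ω : Ω) :
    |bcZ μ ℱ X n ω| ≤ 1 := by
  rw [bcZ, abs_div, abs_of_pos (bcD_pos μ ℱ X (n+1) ω), div_le_one (bcD_pos μ ℱ X (n+1) ω)]
  refine le_trans ?_ (bcD_one_le μ ℱ X (n+1) ω)
  rw [abs_le]
  constructor <;>
    linarith [(bcX_mem X h01 n ω).1, (bcX_mem X h01 n ω).2,
      bcQ_nonneg μ ℱ X n ω, bcQ_le_one μ ℱ X n ω]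

lemma bcM_meas (hadapted : ∀ n, StronglyMeasurable[ℱ (n + 1)] (X (n + 1))) (n : ℕ) :
    StronglyMeasurable[ℱ n] (bcM μ ℱ X n) := by
  refine Finset.stronglyMeasurable_fun_sum _ fun k hk => ?_
  exact (bcZ_meas μ ℱ X hadapted k).mono (ℱ.mono (mem_range.1 hk))

lemma bcM_abs_le (h01 : ∀ n ω, X (n + 1) ω = 0 ∨ X (n + 1) ω = 1) (n : ℕ) (ω : Ω) :
    |bcM μ ℱ X n ω| ≤ n := by
  calc |bcM μ ℱ X n ω| ≤ ∑ k ∈ range n, |bcZ μ ℱ X k ω| := abs_sum_le_sum_abs _ _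
    _ ≤ ∑ k ∈ range n, (1:ℝ) := sum_le_sum fun k _ => bcZ_abs_le μ ℱ X h01 k ω
    _ = n := by simp

lemma bcZ_int (h01 : ∀ n ω, X (n + 1) ω = 0 ∨ X (n + 1) ω = 1)
    (hadapted : ∀ n, StronglyMeasurable[ℱ (n + 1)] (X (n + 1))) (n : ℕ) :
    Integrable (bcZ μ ℱ X n) μ :=
  bc_int_of_bound μ ((bcZ_meas μ ℱ X hadapted n).mono (ℱ.le (n+1))) 1
    (bcZ_abs_le μ ℱ X h01 n)

lemma bcM_int (h01 : ∀ n ω, X (n + 1) ω = 0 ∨ X (n + 1) ω = 1)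
    (hadapted : ∀ n, StronglyMeasurable[ℱ (n + 1)] (X (n + 1))) (n : ℕ) :
    Integrable (bcM μ ℱ X n) μ :=
  bc_int_of_bound μ ((bcM_meas μ ℱ X hadapted n).mono (ℱ.le n)) n
    (bcM_abs_le μ ℱ X h01 n)

/-- ∫ M_n · Z_n = 0 -/
lemma bcMZ (h01 : ∀ n ω, X (n + 1) ω = 0 ∨ X (n + 1) ω = 1)
    (hadapted : ∀ n, StronglyMeasurable[ℱ (n + 1)] (X (n + 1))) (n : ℕ) :
    ∫ ω, bcM μ ℱ X n ω * bcZ μ ℱ X n ω ∂μ = 0 := by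
  have hf : StronglyMeasurable[ℱ n] (fun ω => bcM μ ℱ X n ω / bcD μ ℱ X (n+1) ω) :=
    ((bcM_meas μ ℱ X hadapted n).measurable.div
      (bcD_meas' μ ℱ X n).measurable).stronglyMeasurable
  have hb : ∀ ω, |bcM μ ℱ X n ω / bcD μ ℱ X (n+1) ω| ≤ (n:ℝ) := by
    intro ω
    rw [abs_div, abs_of_pos (bcD_pos μ ℱ X (n+1) ω)]
    calc |bcM μ ℱ X n ω| / bcD μ ℱ X (n+1) ω ≤ |bcM μ ℱ X n ω| / 1 :=
          div_le_div_of_nonneg_left (abs_nonneg _) zero_lt_one (bcD_one_le μ ℱ X (n+1) ω)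
      _ ≤ n := by rw [div_one]; exact bcM_abs_le μ ℱ X h01 n ω
  have := bc_key μ ℱ X h01 hadapted n _ hf n hb
  rw [← this]
  refine integral_congr_ae (Eventually.of_forall fun ω => ?_)
  simp only [bcZ]
  ring

/-- ∫ Z_n² ≤ ∫ (1/D_n - 1/D_{n+1}) -/
lemma bcZsq (h01 : ∀ n ω, X (n + 1) ω = 0 ∨ X (n + 1) ω = 1)
    (hadapted : ∀ n, StronglyMeasurable[ℱ (n + 1)] (X (n + 1))) (n : ℕ) :
    ∫ ω, (bcZ μ ℱ X n ω)^2 ∂μ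
      ≤ ∫ ω, (1 / bcD μ ℱ X n ω - 1 / bcD μ ℱ X (n+1) ω) ∂μ := by
  -- pointwise decomposition
  have hdec : ∀ ω, (bcZ μ ℱ X n ω)^2
      = ((1 - 2 * bcQ μ ℱ X n ω) / (bcD μ ℱ X (n+1) ω)^2)
          * (X (n+1) ω - bcQ μ ℱ X n ω)
        + (bcQ μ ℱ X n ω - (bcQ μ ℱ X n ω)^2) / (bcD μ ℱ X (n+1) ω)^2 := by
    intro ω
    have hD := (bcD_pos μ ℱ X (n+1) ω).ne'
    simp only [bcZ]
    rcases h01 n ω with h | h <;> rw [h] <;> field_simp <;> ring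
  have hf : StronglyMeasurable[ℱ n]
      (fun ω => (1 - 2 * bcQ μ ℱ X n ω) / (bcD μ ℱ X (n+1) ω)^2) := by
    refine Measurable.stronglyMeasurable ?_
    exact ((measurable_const.sub ((bcQ_meas μ ℱ X n).measurable.const_mul 2)).div
      ((bcD_meas' μ ℱ X n).measurable.pow_const 2))
  have hfb : ∀ ω, |(1 - 2 * bcQ μ ℱ X n ω) / (bcD μ ℱ X (n+1) ω)^2| ≤ 1 := by
    intro ω
    have h1 := bcD_one_le μ ℱ X (n+1) ω
    have h2 : (1:ℝ) ≤ (bcD μ ℱ X (n+1) ω)^2 := by nlinarith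
    rw [abs_div, abs_of_pos (by positivity : (0:ℝ) < (bcD μ ℱ X (n+1) ω)^2),
      div_le_one (by positivity)]
    refine le_trans ?_ h2
    rw [abs_le]
    constructor <;> linarith [bcQ_nonneg μ ℱ X n ω, bcQ_le_one μ ℱ X n ω]
  have hkey := bc_key μ ℱ X h01 hadapted n _ hf 1 hfb
  -- integrability of remainder term
  have hrem_meas : StronglyMeasurable[m0]
      (fun ω => (bcQ μ ℱ X n ω - (bcQ μ ℱ X n ω)^2) / (bcD μ ℱ X (n+1) ω)^2) := by
    refine Measurable.stronglyMeasurable ?_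
    have hq := ((bcQ_meas μ ℱ X n).mono (ℱ.le n)).measurable
    have hD := ((bcD_meas' μ ℱ X n).mono (ℱ.le n)).measurable
    exact  (hq.sub (hq.pow_const 2)).div (hD.pow_const 2)
  have hrem_b : ∀ ω, |(bcQ μ ℱ X n ω - (bcQ μ ℱ X n ω)^2) / (bcD μ ℱ X (n+1) ω)^2| ≤ 1 := by
    intro ω
    have h1 := bcD_one_le μ ℱ X (n+1) ω
    have h2 : (1:ℝ) ≤ (bcD μ ℱ X (n+1) ω)^2 := by nlinarith
    rw [abs_div, abs_of_pos (by positivity : (0:ℝ) < (bcD μ ℱ X (n+1) ω)^2),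
      div_le_one (by positivity)]
    refine le_trans ?_ h2
    rw [abs_le]
    have := bcQ_nonneg μ ℱ X n ω; have := bcQ_le_one μ ℱ X n ω
    constructor <;> nlinarith
  have hrem_int : Integrable
      (fun ω => (bcQ μ ℱ X n ω - (bcQ μ ℱ X n ω)^2) / (bcD μ ℱ X (n+1) ω)^2) μ :=
    bc_int_of_bound μ hrem_meas 1 hrem_b
  -- integrability of the cross term
  have hcross_meas : StronglyMeasurable[m0]
      (fun ω => ((1 - 2 * bcQ μ ℱ X n ω) / (bcD μ ℱ X (n+1) ω)^2)
        * (X (n+1) ω - bcQ μ ℱ X n ω)) := by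
    refine (hf.mono (ℱ.le n)).mul ?_
    exact ((hadapted n).mono (ℱ.le (n+1))).sub ((bcQ_meas μ ℱ X n).mono (ℱ.le n))
  have hcross_b : ∀ ω, |((1 - 2 * bcQ μ ℱ X n ω) / (bcD μ ℱ X (n+1) ω)^2)
      * (X (n+1) ω - bcQ μ ℱ X n ω)| ≤ 1 := by
    intro ω
    rw [abs_mul]
    calc |(1 - 2 * bcQ μ ℱ X n ω) / (bcD μ ℱ X (n+1) ω)^2| * |X (n+1) ω - bcQ μ ℱ X n ω|
        ≤ 1 * 1 := by
          refine mul_le_mul (hfb ω) ?_ (abs_nonneg _) zero_le_one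
          rw [abs_le]
          constructor <;> linarith [(bcX_mem X h01 n ω).1, (bcX_mem X h01 n ω).2,
            bcQ_nonneg μ ℱ X n ω, bcQ_le_one μ ℱ X n ω]
      _ = 1 := mul_one 1
  have hcross_int : Integrable (fun ω => ((1 - 2 * bcQ μ ℱ X n ω) / (bcD μ ℱ X (n+1) ω)^2)
      * (X (n+1) ω - bcQ μ ℱ X n ω)) μ := bc_int_of_bound μ hcross_meas 1 hcross_b
  calc ∫ ω, (bcZ μ ℱ X n ω)^2 ∂μ
      = ∫ ω, (((1 - 2 * bcQ μ ℱ X n ω) / (bcD μ ℱ X (n+1) ω)^2)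
            * (X (n+1) ω - bcQ μ ℱ X n ω)
          + (bcQ μ ℱ X n ω - (bcQ μ ℱ X n ω)^2) / (bcD μ ℱ X (n+1) ω)^2) ∂μ :=
        integral_congr_ae (Eventually.of_forall fun ω => hdec ω)
    _ = ∫ ω, (bcQ μ ℱ X n ω - (bcQ μ ℱ X n ω)^2) / (bcD μ ℱ X (n+1) ω)^2 ∂μ := by
        rw [integral_add hcross_int hrem_int, hkey, zero_add]
    _ ≤ ∫ ω, (1 / bcD μ ℱ X n ω - 1 / bcD μ ℱ X (n+1) ω) ∂μ := by
        refine integral_mono hrem_int ?_ fun ω => ?_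
        · refine bc_int_of_bound μ ?_ 2 ?_
          · refine Measurable.stronglyMeasurable ?_
            have hD1 := ((bcD_meas μ ℱ X n).mono (ℱ.le n)).measurable
            have hD2 := ((bcD_meas' μ ℱ X n).mono (ℱ.le n)).measurable
            exact (measurable_const.div hD1).sub (measurable_const.div hD2)
          · intro ω
            have h1 := bcD_one_le μ ℱ X n ω
            have h2 := bcD_one_le μ ℱ X (n+1) ω
            have e1 : 1 / bcD μ ℱ X n ω ≤ 1 := by
              rw [div_le_one (by linarith)]; linarith
            have e2 : 1 / bcD μ ℱ X (n+1) ω ≤ 1 := by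
              rw [div_le_one (by linarith)]; linarith
            have e3 : 0 < 1 / bcD μ ℱ X n ω := by positivity
            have e4 : 0 < 1 / bcD μ ℱ X (n+1) ω := by positivity
            rw [abs_le]; constructor <;> linarith
        · -- pointwise: (q - q²)/D² ≤ 1/Dₙ - 1/Dₙ₊₁
          have ha := bcD_one_le μ ℱ X n ω
          have hb' := bcD_one_le μ ℱ X (n+1) ω
          have hstep := bcD_succ μ ℱ X n ω
          have hq0 := bcQ_nonneg μ ℱ X n ω
          have hq1 := bcQ_le_one μ ℱ X n ω
          set a := bcD μ ℱ X n ω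
          set b := bcD μ ℱ X (n+1) ω
          set c := bcQ μ ℱ X n ω
          have h1 : (c - c^2)/b^2 ≤ c/b^2 :=
            div_le_div_of_nonneg_right (sub_le_self c (sq_nonneg c)) (sq_nonneg b)
          have h2 : c/b^2 ≤ c/(a*b) := by
            apply div_le_div_of_nonneg_left hq0 (by nlinarith) (by nlinarith)
          have h3 : c/(a*b) = 1/a - 1/b := by
            rw [hstep]; field_simp; ring
          linarith

lemma bcMsq_int (h01 : ∀ n ω, X (n + 1) ω = 0 ∨ X (n + 1) ω = 1)
    (hadapted : ∀ n, StronglyMeasurable[ℱ (n + 1)] (X (n + 1))) (n : ℕ) :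
    Integrable (fun ω => (bcM μ ℱ X n ω)^2) μ := by
  refine bc_int_of_bound μ ?_ (n^2) fun ω => ?_
  · exact (((bcM_meas μ ℱ X hadapted n).mono (ℱ.le n)).measurable.pow_const 2).stronglyMeasurable
  · rw [abs_pow]
    have := bcM_abs_le μ ℱ X h01 n ω
    have := abs_nonneg (bcM μ ℱ X n ω)
    nlinarith

lemma bcDinv_int (n : ℕ) : Integrable (fun ω => 1 - 1 / bcD μ ℱ X n ω) μ := by
  refine bc_int_of_bound μ ?_ 1 fun ω => ?_
  · exact (measurable_const.sub
      (measurable_const.div ((bcD_meas μ ℱ X n).mono (ℱ.le n)).measurable)).stronglyMeasurable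
  · have h1 := bcD_one_le μ ℱ X n ω
    have e1 : 1 / bcD μ ℱ X n ω ≤ 1 := by rw [div_le_one (by linarith)]; linarith
    have e3 : 0 < 1 / bcD μ ℱ X n ω := by positivity
    rw [abs_le]; constructor <;> linarith

lemma bcMsq_le_one (h01 : ∀ n ω, X (n + 1) ω = 0 ∨ X (n + 1) ω = 1)
    (hadapted : ∀ n, StronglyMeasurable[ℱ (n + 1)] (X (n + 1))) (n : ℕ) :
    ∫ ω, (bcM μ ℱ X n ω)^2 ∂μ ≤ 1 := by
  have main : ∀ n, ∫ ω, (bcM μ ℱ X n ω)^2 ∂μ ≤ ∫ ω, (1 - 1 / bcD μ ℱ X n ω) ∂μ := by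
    intro n
    induction n with
    | zero => simp [bcM, bcD]
    | succ n ih =>
      have hZint : Integrable (fun ω => (bcZ μ ℱ X n ω)^2) μ := by
        refine bc_int_of_bound μ
          ((((bcZ_meas μ ℱ X hadapted n).mono (ℱ.le (n+1))).measurable.pow_const
            2).stronglyMeasurable) 1 fun ω => ?_
        rw [abs_pow]
        calc |bcZ μ ℱ X n ω|^2 ≤ 1^2 := by
              have := bcZ_abs_le μ ℱ X h01 n ω
              have := abs_nonneg (bcZ μ ℱ X n ω)
              nlinarith
          _ = 1 := one_pow 2
      have hMZint : Integrable (fun ω => bcM μ ℱ X n ω * bcZ μ ℱ X n ω) μ := by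
        refine bc_int_of_bound μ
          (((bcM_meas μ ℱ X hadapted n).mono (ℱ.le n)).mul
            ((bcZ_meas μ ℱ X hadapted n).mono (ℱ.le (n+1)))) n fun ω => ?_
        rw [abs_mul]
        calc |bcM μ ℱ X n ω| * |bcZ μ ℱ X n ω| ≤ n * 1 :=
              mul_le_mul (bcM_abs_le μ ℱ X h01 n ω) (bcZ_abs_le μ ℱ X h01 n ω)
                (abs_nonneg _) (Nat.cast_nonneg n)
          _ = n := mul_one _
      have hdiff_int : Integrable (fun ω => 1 / bcD μ ℱ X n ω - 1 / bcD μ ℱ X (n+1) ω) μ := by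
        have h1 := bcDinv_int μ ℱ X n
        have h2 := bcDinv_int μ ℱ X (n+1)
        have := h2.sub h1
        refine this.congr (Eventually.of_forall fun ω => by simp only [Pi.sub_apply]; ring)
      have expand : ∫ ω, (bcM μ ℱ X (n+1) ω)^2 ∂μ
          = ∫ ω, (bcM μ ℱ X n ω)^2 ∂μ + (2 * ∫ ω, bcM μ ℱ X n ω * bcZ μ ℱ X n ω ∂μ
            + ∫ ω, (bcZ μ ℱ X n ω)^2 ∂μ) := by
        have i1 := integral_add (μ := μ) (bcMsq_int μ ℱ X h01 hadapted n)
          ((hMZint.const_mul 2).add hZint)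
        have i2 := integral_add (μ := μ) (hMZint.const_mul 2) hZint
        have i3 := integral_const_mul (μ := μ) 2 (fun ω => bcM μ ℱ X n ω * bcZ μ ℱ X n ω)
        calc ∫ ω, (bcM μ ℱ X (n+1) ω)^2 ∂μ
            = ∫ ω, ((bcM μ ℱ X n ω)^2
                + (2 * (bcM μ ℱ X n ω * bcZ μ ℱ X n ω) + (bcZ μ ℱ X n ω)^2)) ∂μ := by
              refine integral_congr_ae (Eventually.of_forall fun ω => ?_)
              simp only [bcM, sum_range_succ]
              ring
          _ = ∫ ω, (bcM μ ℱ X n ω)^2 ∂μ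
                + ∫ ω, (2 * (bcM μ ℱ X n ω * bcZ μ ℱ X n ω) + (bcZ μ ℱ X n ω)^2) ∂μ := i1
          _ = ∫ ω, (bcM μ ℱ X n ω)^2 ∂μ
                + (∫ ω, 2 * (bcM μ ℱ X n ω * bcZ μ ℱ X n ω) ∂μ
                  + ∫ ω, (bcZ μ ℱ X n ω)^2 ∂μ) := by rw [i2]
          _ = ∫ ω, (bcM μ ℱ X n ω)^2 ∂μ
                + (2 * ∫ ω, bcM μ ℱ X n ω * bcZ μ ℱ X n ω ∂μ
                  + ∫ ω, (bcZ μ ℱ X n ω)^2 ∂μ) := by rw [i3]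
      rw [expand, bcMZ μ ℱ X h01 hadapted n]
      have step := bcZsq μ ℱ X h01 hadapted n
      have final : ∫ ω, (1 - 1/bcD μ ℱ X n ω) ∂μ
          + ∫ ω, (1/bcD μ ℱ X n ω - 1/bcD μ ℱ X (n+1) ω) ∂μ
          = ∫ ω, (1 - 1/bcD μ ℱ X (n+1) ω) ∂μ := by
        rw [← integral_add (bcDinv_int μ ℱ X n) hdiff_int]
        refine integral_congr_ae (Eventually.of_forall fun ω => by ring)
      linarith
  refine (main n).trans ?_
  calc ∫ ω, (1 - 1/bcD μ ℱ X n ω) ∂μ ≤ ∫ _ω, (1:ℝ) ∂μ := by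
        refine integral_mono (bcDinv_int μ ℱ X n) (integrable_const 1) fun ω => ?_
        have h1 := bcD_one_le μ ℱ X n ω
        have : 0 < 1 / bcD μ ℱ X n ω := by positivity
        linarith
    _ = 1 := by simp

lemma bcM_martingale (h01 : ∀ n ω, X (n + 1) ω = 0 ∨ X (n + 1) ω = 1)
    (hadapted : ∀ n, StronglyMeasurable[ℱ (n + 1)] (X (n + 1))) :
    Martingale (bcM μ ℱ X) ℱ μ := by
  refine martingale_nat (fun n => bcM_meas μ ℱ X hadapted n)
    (fun n => bcM_int μ ℱ X h01 hadapted n) fun n => ?_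
  -- goal : bcM n =ᵐ μ[bcM (n+1) | ℱ n]
  have hZcond : μ[bcZ μ ℱ X n | ℱ n] =ᵐ[μ] 0 := by
    have hc : bcZ μ ℱ X n = (fun ω => (bcD μ ℱ X (n+1) ω)⁻¹)
        * (fun ω => X (n+1) ω - bcQ μ ℱ X n ω) := by
      ext ω; simp [bcZ, div_eq_inv_mul, mul_comm]
    have hfmeas : StronglyMeasurable[ℱ n] (fun ω => (bcD μ ℱ X (n+1) ω)⁻¹) :=
      ((bcD_meas' μ ℱ X n).measurable.inv).stronglyMeasurable
    have hsub_int : Integrable (fun ω => X (n+1) ω - bcQ μ ℱ X n ω) μ :=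
      (bcX_int μ ℱ X h01 hadapted n).sub
        (bc_int_of_bound μ ((bcQ_meas μ ℱ X n).mono (ℱ.le n)) 1 fun ω => by
          rw [abs_le]
          constructor <;> linarith [bcQ_nonneg μ ℱ X n ω, bcQ_le_one μ ℱ X n ω])
    have hint : Integrable ((fun ω => (bcD μ ℱ X (n+1) ω)⁻¹)
        * fun ω => X (n+1) ω - bcQ μ ℱ X n ω) μ := by
      rw [← hc]; exact bcZ_int μ ℱ X h01 hadapted n
    rw [hc]
    refine (condExp_mul_of_stronglyMeasurable_left hfmeas hint hsub_int).trans ?_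
    have : μ[(fun ω => X (n+1) ω - bcQ μ ℱ X n ω) | ℱ n] =ᵐ[μ] 0 := by
      refine (condExp_sub (bcX_int μ ℱ X h01 hadapted n)
        (bc_int_of_bound μ ((bcQ_meas μ ℱ X n).mono (ℱ.le n)) 1 fun ω => by
          rw [abs_le]
          constructor <;> linarith [bcQ_nonneg μ ℱ X n ω, bcQ_le_one μ ℱ X n ω]) (ℱ n)).trans ?_
      have hq := bcQ_ae μ ℱ X h01 hadapted n
      have hqce : μ[bcQ μ ℱ X n | ℱ n] = bcQ μ ℱ X n :=
        condExp_of_stronglyMeasurable (ℱ.le n) (bcQ_meas μ ℱ X n)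
          (bc_int_of_bound μ ((bcQ_meas μ ℱ X n).mono (ℱ.le n)) 1 fun ω => by
            rw [abs_le]
            constructor <;> linarith [bcQ_nonneg μ ℱ X n ω, bcQ_le_one μ ℱ X n ω])
      rw [hqce]
      filter_upwards [hq] with ω hω
      simp [hω]
    filter_upwards [this] with ω hω
    simp only [Pi.mul_apply, hω, Pi.zero_apply, mul_zero]
  have hMcond : μ[bcM μ ℱ X (n+1) | ℱ n]
      =ᵐ[μ] μ[bcM μ ℱ X n | ℱ n] + μ[bcZ μ ℱ X n | ℱ n] := by
    have : bcM μ ℱ X (n+1) = bcM μ ℱ X n + bcZ μ ℱ X n := by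
      ext ω; simp [bcM, sum_range_succ]
    rw [this]
    exact condExp_add (bcM_int μ ℱ X h01 hadapted n) (bcZ_int μ ℱ X h01 hadapted n) (ℱ n)
  have hMce : μ[bcM μ ℱ X n | ℱ n] = bcM μ ℱ X n :=
    condExp_of_stronglyMeasurable (ℱ.le n) (bcM_meas μ ℱ X hadapted n)
      (bcM_int μ ℱ X h01 hadapted n)
  filter_upwards [hMcond, hZcond] with ω h1 h2
  rw [h1, Pi.add_apply, hMce, h2, Pi.zero_apply, add_zero]

lemma bcM_L1_bound (h01 : ∀ n ω, X (n + 1) ω = 0 ∨ X (n + 1) ω = 1)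
    (hadapted : ∀ n, StronglyMeasurable[ℱ (n + 1)] (X (n + 1))) (n : ℕ) :
    eLpNorm (bcM μ ℱ X n) 1 μ ≤ 1 := by
  have habs : ∫ ω, |bcM μ ℱ X n ω| ∂μ ≤ 1 := by
    have hub : ∀ ω, |bcM μ ℱ X n ω| ≤ (1 + (bcM μ ℱ X n ω)^2)/2 := by
      intro ω
      nlinarith [sq_nonneg (|bcM μ ℱ X n ω| - 1), sq_abs (bcM μ ℱ X n ω)]
    calc ∫ ω, |bcM μ ℱ X n ω| ∂μ ≤ ∫ ω, (1 + (bcM μ ℱ X n ω)^2)/2 ∂μ := by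
          refine integral_mono ((bcM_int μ ℱ X h01 hadapted n).abs) ?_ hub
          exact ((integrable_const 1).add (bcMsq_int μ ℱ X h01 hadapted n)).div_const 2
      _ = (1 + ∫ ω, (bcM μ ℱ X n ω)^2 ∂μ)/2 := by
          rw [integral_div, integral_add (integrable_const 1) (bcMsq_int μ ℱ X h01 hadapted n)]
          simp
      _ ≤ (1 + 1)/2 := by
          have := bcMsq_le_one μ ℱ X h01 hadapted n
          linarith
      _ = 1 := by norm_num
  rw [eLpNorm_one_eq_lintegral_enorm,
    ← ofReal_integral_norm_eq_lintegral_enorm (bcM_int μ ℱ X h01 hadapted n)]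
  calc ENNReal.ofReal (∫ ω, ‖bcM μ ℱ X n ω‖ ∂μ) ≤ ENNReal.ofReal 1 := by
        refine ENNReal.ofReal_le_ofReal ?_
        simpa [Real.norm_eq_abs] using habs
    _ = 1 := ENNReal.ofReal_one

end main

theorem stmt_10 {Ω : Type*} {m0 : MeasurableSpace Ω} (μ : Measure Ω) [IsProbabilityMeasure μ]
    (ℱ : Filtration ℕ m0) (X : ℕ → Ω → ℝ)
    (hadapted : ∀ n, StronglyMeasurable[ℱ (n + 1)] (X (n + 1)))
    (h01 : ∀ n ω, X (n + 1) ω = 0 ∨ X (n + 1) ω = 1)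
    (p : ℕ → Ω → ℝ)
    (hp : ∀ n, p (n + 1) =ᵐ[μ] μ[X (n + 1) | ℱ n]) :
    ∀ᵐ ω ∂μ,
      Tendsto (fun n => ∑ k ∈ Finset.range n, p (k + 1) ω) atTop atTop →
      Tendsto (fun n => (∑ k ∈ Finset.range n, X (k + 1) ω) /
        (∑ k ∈ Finset.range n, p (k + 1) ω)) atTop (nhds 1) := by
  have hconv := (bcM_martingale μ ℱ X h01 hadapted).submartingale.exists_ae_tendsto_of_bdd
    (R := 1) (fun n => bcM_L1_bound μ ℱ X h01 hadapted n)
  have hpq : ∀ᵐ ω ∂μ, ∀ n, p (n+1) ω = bcQ μ ℱ X n ω := by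
    rw [ae_all_iff]
    intro n
    filter_upwards [hp n, bcQ_ae μ ℱ X h01 hadapted n] with ω h1 h2
    rw [h1, ← h2]
  filter_upwards [hconv, hpq] with ω hcex hpqω htend
  obtain ⟨c, hc⟩ := hcex
  -- notation
  set S : ℕ → ℝ := fun n => ∑ k ∈ range n, p (k+1) ω with hS_def
  set u : ℕ → ℝ := fun k => X (k+1) ω - bcQ μ ℱ X k ω with hu_def
  set b : ℕ → ℝ := fun n => bcD μ ℱ X (n+1) ω with hb_def
  have hSq : ∀ n, S n = ∑ k ∈ range n, bcQ μ ℱ X k ω := fun n =>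
    sum_congr rfl fun k _ => hpqω k
  have hSD : ∀ n, bcD μ ℱ X n ω = S n + 1 := by
    intro n; rw [hSq n]; simp [bcD]; ring
  have hb1 : ∀ n, 1 ≤ b n := fun n => bcD_one_le μ ℱ X (n+1) ω
  have hbm : Monotone b := fun i j h => bcD_mono μ ℱ X ω (Nat.succ_le_succ h)
  have hbt : Tendsto b atTop atTop := by
    have h1 : Tendsto (fun n => S (n+1)) atTop atTop :=
      htend.comp (tendsto_add_atTop_nat 1)
    have h2 : Tendsto (fun n => S (n+1) + 1) atTop atTop :=
      tendsto_atTop_add_const_right _ 1 h1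
    exact h2.congr fun n => (hSD (n+1)).symm
  have hc' : Tendsto (fun n => ∑ k ∈ range n, u k / b k) atTop (nhds c) := by
    refine hc.congr fun n => ?_
    exact sum_congr rfl fun k _ => rfl
  have hkr := kronecker hb1 hbm hbt hc'
  have hg : Tendsto (fun n => (∑ k ∈ range n, u k) / bcD μ ℱ X n ω) atTop (nhds 0) := by
    rw [← tendsto_add_atTop_iff_nat 1]
    exact hkr
  -- eventual positivity
  have hev : ∀ᶠ n in atTop, (1:ℝ) ≤ S n := htend.eventually_ge_atTop 1
  have hSinv : Tendsto (fun n => (S n)⁻¹) atTop (nhds 0) := htend.inv_tendsto_atTop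
  have hDS : Tendsto (fun n => bcD μ ℱ X n ω / S n) atTop (nhds 1) := by
    have : Tendsto (fun n => 1 + (S n)⁻¹) atTop (nhds 1) := by
      simpa using (tendsto_const_nhds (x := (1:ℝ))).add hSinv
    refine Tendsto.congr' ?_ this
    filter_upwards [hev] with n hn
    have hSne : S n ≠ 0 := by linarith
    rw [hSD n]
    field_simp
  have hUS : Tendsto (fun n => (∑ k ∈ range n, u k) / S n) atTop (nhds 0) := by
    have hmul := hg.mul hDS
    rw [mul_one] at hmul
    refine Tendsto.congr' ?_ hmul
    filter_upwards [hev] with n hn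
    have hSne : S n ≠ 0 := by linarith
    have hDne : bcD μ ℱ X n ω ≠ 0 := (bcD_pos μ ℱ X n ω).ne'
    field_simp
  -- final
  have hT : ∀ n, (∑ k ∈ range n, X (k+1) ω) = S n + ∑ k ∈ range n, u k := by
    intro n
    rw [hSq n, ← sum_add_distrib]
    refine sum_congr rfl fun k _ => ?_
    rw [hu_def]; ring
  have hfinal : Tendsto (fun n => 1 + (∑ k ∈ range n, u k) / S n) atTop (nhds 1) := by
    simpa using (tendsto_const_nhds (x := (1:ℝ))).add hUS
  refine Tendsto.congr' ?_ hfinal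
  filter_upwards [hev] with n hn
  have hSne : S n ≠ 0 := by linarith
  rw [hT n, add_div, div_self hSne]
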